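/- Let $\{a_k\}_{k\ge 1}$ be a nonnegative real sequence, $\{\beta_j\}_{j\ge 1}$ a nonnegative real sequence, and $c \ge 0$. If $a_k^2 \le c^2 + \sum_{j=1}^{k} \beta_j a_j$ for all $k \ge 1$, then $a_k \le c + \sum_{j=1}^{k} \beta_j$ for all $k \ge 1$. -/

import Mathlib

theorem stmt_0 (a β : ℕ → ℝ) (c : ℝ)
    (ha : ∀ k, 0 ≤ a k) (hβ : ∀ j, 0 ≤ β j) (hc : 0 ≤ c)
    (h : ∀ k ≥ 1, (a k) ^ 2 ≤ c ^ 2 + ∑ j ∈ Finset.Icc 1 k, β j * a j) :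
    ∀ k ≥ 1, a k ≤ c + ∑ j ∈ Finset.Icc 1 k, β j := by
  intro k hk
  have hne : (Finset.Icc 1 k).Nonempty := ⟨k, by simp [hk]⟩
  obtain ⟨j₀, hj₀, hmax⟩ := Finset.exists_max_image (Finset.Icc 1 k) a hne
  set m := a j₀ with hm
  have hak : a k ≤ m := hmax k (by simp [hk])
  have hsumnn : 0 ≤ ∑ j ∈ Finset.Icc 1 k, β j :=
    Finset.sum_nonneg fun j _ => hβ j
  rcases le_or_gt m c with hmc | hmc
  · linarith
  · have hm0 : 0 ≤ m := ha j₀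
    have hj₀1 : 1 ≤ j₀ := (Finset.mem_Icc.mp hj₀).1
    have hj₀k : j₀ ≤ k := (Finset.mem_Icc.mp hj₀).2
    have h1 : m ^ 2 ≤ c ^ 2 + ∑ j ∈ Finset.Icc 1 j₀, β j * a j := h j₀ hj₀1
    have h2 : ∑ j ∈ Finset.Icc 1 j₀, β j * a j ≤ ∑ j ∈ Finset.Icc 1 k, β j * m :=
      calc ∑ j ∈ Finset.Icc 1 j₀, β j * a j
          ≤ ∑ j ∈ Finset.Icc 1 j₀, β j * m := by
            apply Finset.sum_le_sum
            intro j hj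
            exact mul_le_mul_of_nonneg_left
              (hmax j (Finset.Icc_subset_Icc_right hj₀k hj)) (hβ j)
        _ ≤ ∑ j ∈ Finset.Icc 1 k, β j * m := by
            apply Finset.sum_le_sum_of_subset_of_nonneg
              (Finset.Icc_subset_Icc_right hj₀k)
            intro j _ _
            exact mul_nonneg (hβ j) hm0
    have h3 : m ^ 2 ≤ c ^ 2 + m * ∑ j ∈ Finset.Icc 1 k, β j := by
      rw [Finset.mul_sum]
      calc m ^ 2 ≤ c ^ 2 + ∑ j ∈ Finset.Icc 1 k, β j * m := le_trans h1 (by linarith)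
        _ = c ^ 2 + ∑ j ∈ Finset.Icc 1 k, m * β j := by
            simp [mul_comm]
    -- (m - c)(m + c) ≤ m * Σβ, m + c ≥ m, m - c > 0
    have key : m * (m - c) ≤ m * ∑ j ∈ Finset.Icc 1 k, β j := by nlinarith
    have : m - c ≤ ∑ j ∈ Finset.Icc 1 k, β j :=
      le_of_mul_le_mul_left key (lt_of_le_of_lt hc hmc)
    linarith
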